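/- Let m ≥ 2. For each n ≥ 1, let Xₙ¹, …, Xₙᵐ be independent random variables, each uniform on {1, …, n}; let Zₙ = gcd(Xₙ¹, …, Xₙᵐ) and let Wₙ = r_m(Xₙ¹), where r_m(k) is the largest integer a such that aᵐ divides k. Then both (Zₙ) and (Wₙ) converge in law to the Zeta law of parameter m: for every positive integer k, P(Zₙ = k) → k^{-m}/ζ(m) and P(Wₙ = k) → k^{-m}/ζ(m) as n → ∞. -/

import Mathlib

open Filter Topology

/-- The sum `ζ(s) = ∑_{n ≥ 1} n ^ (-s)` (the `n = 0` term vanishes since `0 ^ (-s) = 0`). -/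
noncomputable def zetaSum (s : ℝ) : ℝ := ∑' n : ℕ, (n : ℝ) ^ (-s)

/-- `r_m k` is the largest integer `a` such that `a ^ m` divides `k` (for `k ≥ 1`). -/
def largestPowerRoot (m k : ℕ) : ℕ := Nat.findGreatest (fun a => a ^ m ∣ k) k

section Aux

open ArithmeticFunction Finset
open scoped LSeries.notation
open scoped ArithmeticFunction.Moebius

lemma sum_moeb (n : ℕ) : ∑ d ∈ n.divisors, (μ d : ℤ) = if n = 1 then 1 else 0 := by
  have := congrArg (fun f : ArithmeticFunction ℤ => f n) coe_zeta_mul_moebius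
  simp only [coe_zeta_mul_apply] at this
  rw [this, one_apply]

lemma moeb_indicator (n k g : ℕ) (hk : 1 ≤ k) (hg : 1 ≤ g) (hgn : g ≤ n) :
    (if g = k then (1:ℤ) else 0) = ∑ d ∈ Icc 1 n, if k * d ∣ g then (μ d : ℤ) else 0 := by
  by_cases hkg : k ∣ g
  · obtain ⟨g', rfl⟩ := hkg
    have hk0 : 0 < k := hk
    have hg' : 0 < g' := by
      rcases Nat.eq_zero_or_pos g' with rfl | h
      · simp at hg
      · exact h
    have hdvd : ∀ d : ℕ, k * d ∣ k * g' ↔ d ∣ g' := fun d =>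
      mul_dvd_mul_iff_left (by omega : k ≠ 0)
    simp_rw [hdvd]
    rw [← Finset.sum_filter]
    have hset : {d ∈ Icc 1 n | d ∣ g'} = g'.divisors := by
      ext d
      simp only [mem_filter, mem_Icc, Nat.mem_divisors]
      constructor
      · exact fun h => ⟨h.2, by omega⟩
      · intro h
        have hd1 : 1 ≤ d := Nat.pos_of_dvd_of_pos h.1 hg'
        have hdg : d ≤ g' := Nat.le_of_dvd hg' h.1
        have : g' ≤ n := le_trans (Nat.le_mul_of_pos_left g' hk0) hgn
        exact ⟨⟨hd1, by omega⟩, h.1⟩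
    rw [hset, sum_moeb]
    congr 1
    simp [Nat.mul_eq_left (by omega : k ≠ 0)]
  · have : ∀ d ∈ Icc 1 n, (if k * d ∣ g then (μ d : ℤ) else 0) = 0 := by
      intro d _
      rw [if_neg fun h => hkg (dvd_trans (dvd_mul_right k d) h)]
    rw [Finset.sum_congr rfl this, Finset.sum_const_zero, if_neg]
    rintro rfl; exact hkg dvd_rfl

lemma count_mult (n c : ℕ) : #{x ∈ Finset.Icc 1 n | c ∣ x} = n / c := by
  rw [← Nat.Ioc_filter_dvd_card_eq_div, ← Finset.Icc_add_one_left_eq_Ioc, Nat.zero_add]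

lemma gcd_count (m n k : ℕ) (hm : 1 ≤ m) (hk : 1 ≤ k) :
    ((((Fintype.piFinset fun _ : Fin m => Finset.Icc 1 n).filter
        fun f => Finset.univ.gcd f = k).card : ℤ))
      = ∑ d ∈ Icc 1 n, (μ d : ℤ) * ((n / (k * d) : ℕ) : ℤ) ^ m := by
  rw [Finset.card_filter, Nat.cast_sum]
  simp only [apply_ite (Nat.cast : ℕ → ℤ), Nat.cast_one, Nat.cast_zero]
  have step1 : ∀ f ∈ Fintype.piFinset fun _ : Fin m => Finset.Icc 1 n,
      (if Finset.univ.gcd f = k then (1:ℤ) else 0)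
        = ∑ d ∈ Icc 1 n, if (∀ i, k * d ∣ f i) then (μ d : ℤ) else 0 := by
    intro f hf
    have hmem : ∀ i, f i ∈ Finset.Icc 1 n := fun i => Fintype.mem_piFinset.mp hf i
    have i0 : Fin m := ⟨0, hm⟩
    have hf0 := Finset.mem_Icc.mp (hmem i0)
    have hgd : Finset.univ.gcd f ∣ f i0 := Finset.gcd_dvd (Finset.mem_univ i0)
    have hg1 : 1 ≤ Finset.univ.gcd f := Nat.pos_of_dvd_of_pos hgd (by omega)
    have hgn : Finset.univ.gcd f ≤ n := le_trans (Nat.le_of_dvd (by omega) hgd) hf0.2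
    rw [moeb_indicator n k _ hk hg1 hgn]
    refine Finset.sum_congr rfl fun d _ => ?_
    congr 1
    simp [Finset.dvd_gcd_iff]
  rw [Finset.sum_congr rfl step1, Finset.sum_comm]
  refine Finset.sum_congr rfl fun d _ => ?_
  rw [← Finset.sum_filter, Finset.sum_const, nsmul_eq_mul, mul_comm]
  congr 1
  have hset : ((Fintype.piFinset fun _ : Fin m => Finset.Icc 1 n).filter
      fun f => ∀ i, k * d ∣ f i)
        = Fintype.piFinset fun _ : Fin m => {x ∈ Finset.Icc 1 n | k * d ∣ x} := by
    ext f
    simp only [Finset.mem_filter, Fintype.mem_piFinset]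
    exact ⟨fun h i => ⟨h.1 i, h.2 i⟩, fun h => ⟨fun i => (h i).1, fun i => (h i).2⟩⟩
  rw [hset, Fintype.card_piFinset_const, count_mult]
  push_cast
  ring

lemma pow_lcm_dvd {m x a b : ℕ} (hm : 0 < m) (hx : 0 < x) (ha : a ^ m ∣ x) (hb : b ^ m ∣ x) :
    Nat.lcm a b ^ m ∣ x := by
  have ha0 : a ≠ 0 := by
    rintro rfl; rw [zero_pow hm.ne'] at ha; omega
  have hb0 : b ≠ 0 := by
    rintro rfl; rw [zero_pow hm.ne'] at hb; omega
  rw [← Nat.factorization_le_iff_dvd (pow_ne_zero _ (Nat.lcm_ne_zero ha0 hb0)) hx.ne']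
  rw [Nat.factorization_pow, Nat.factorization_lcm ha0 hb0]
  rw [← Nat.factorization_le_iff_dvd (pow_ne_zero _ ha0) hx.ne', Nat.factorization_pow] at ha
  rw [← Nat.factorization_le_iff_dvd (pow_ne_zero _ hb0) hx.ne', Nat.factorization_pow] at hb
  intro p
  have h1 := ha p
  have h2 := hb p
  simp only [Finsupp.smul_apply, Finsupp.sup_apply, smul_eq_mul] at *
  rcases le_total (a.factorization p) (b.factorization p) with h | h
  · rw [sup_eq_right.mpr h]; exact h2
  · rw [sup_eq_left.mpr h]; exact h1

lemma lpr_pow_dvd {m x : ℕ} (hx : 0 < x) : largestPowerRoot m x ^ m ∣ x :=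
  Nat.findGreatest_spec (P := fun a => a ^ m ∣ x) hx (by simp)

lemma lpr_pos {m x : ℕ} (hx : 0 < x) : 0 < largestPowerRoot m x :=
  Nat.le_findGreatest (P := fun a => a ^ m ∣ x) hx (by simp)

lemma dvd_lpr {m x a : ℕ} (hm : 0 < m) (hx : 0 < x) (ha : a ^ m ∣ x) :
    a ∣ largestPowerRoot m x := by
  set r := largestPowerRoot m x with hr
  have hrd : r ^ m ∣ x := lpr_pow_dvd hx
  have hrpos : 0 < r := lpr_pos hx
  have hL : Nat.lcm a r ^ m ∣ x := pow_lcm_dvd hm hx ha hrd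
  have hLpos : 0 < Nat.lcm a r := Nat.pos_of_ne_zero (by
    intro h
    rw [h, zero_pow hm.ne'] at hL; omega)
  have hLx : Nat.lcm a r ≤ x := by
    calc Nat.lcm a r ≤ Nat.lcm a r ^ m := Nat.le_self_pow hm.ne' _
    _ ≤ x := Nat.le_of_dvd hx hL
  have hLr : Nat.lcm a r ≤ r := Nat.le_findGreatest hLx hL
  have hrL : r ≤ Nat.lcm a r := Nat.le_of_dvd hLpos (Nat.dvd_lcm_right a r)
  have : Nat.lcm a r = r := le_antisymm hLr hrL
  exact this ▸ Nat.dvd_lcm_left a r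

lemma lpr_bound {m x : ℕ} : largestPowerRoot m x ≤ x := Nat.findGreatest_le x

lemma lpr_count (m n k : ℕ) (hm : 1 ≤ m) (hk : 1 ≤ k) :
    ((#{x ∈ Finset.Icc 1 n | largestPowerRoot m x = k} : ℤ))
      = ∑ d ∈ Icc 1 n, (μ d : ℤ) * ((n / (k * d) ^ m : ℕ) : ℤ) := by
  rw [Finset.card_filter, Nat.cast_sum]
  simp only [apply_ite (Nat.cast : ℕ → ℤ), Nat.cast_one, Nat.cast_zero]
  have step1 : ∀ x ∈ Finset.Icc 1 n,
      (if largestPowerRoot m x = k then (1:ℤ) else 0)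
        = ∑ d ∈ Icc 1 n, if (k * d) ^ m ∣ x then (μ d : ℤ) else 0 := by
    intro x hx
    obtain ⟨hx1, hxn⟩ := Finset.mem_Icc.mp hx
    have hx0 : 0 < x := hx1
    have key : ∀ d : ℕ, ((k * d) ^ m ∣ x) ↔ (k * d ∣ largestPowerRoot m x) := fun d =>
      ⟨fun h => dvd_lpr hm hx0 h,
       fun h => dvd_trans (pow_dvd_pow_of_dvd h m) (lpr_pow_dvd hx0)⟩
    simp_rw [key]
    exact moeb_indicator n k _ hk (lpr_pos hx0) (le_trans lpr_bound hxn)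
  rw [Finset.sum_congr rfl step1, Finset.sum_comm]
  refine Finset.sum_congr rfl fun d _ => ?_
  rw [← Finset.sum_filter, Finset.sum_const, nsmul_eq_mul, mul_comm, count_mult]

lemma tendsto_nat_div (c : ℕ) (hc : 0 < c) :
    Tendsto (fun n : ℕ => ((n / c : ℕ) : ℝ) / n) atTop (𝓝 (1 / (c : ℝ))) := by
  have hc' : (0:ℝ) < c := by exact_mod_cast hc
  have hlim : Tendsto (fun n : ℕ => 1 / (c:ℝ) - 1 / n) atTop (𝓝 (1 / c)) := by
    have := (tendsto_const_nhds (x := 1/(c:ℝ)) (f := atTop)).sub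
      tendsto_one_div_atTop_nhds_zero_nat
    simpa using this
  refine tendsto_of_tendsto_of_tendsto_of_le_of_le' hlim tendsto_const_nhds ?_ ?_
  · filter_upwards [eventually_ge_atTop 1] with n hn
    have hn' : (0:ℝ) < n := by exact_mod_cast hn
    have e : (c:ℝ) * ((n/c : ℕ):ℝ) + ((n % c : ℕ):ℝ) = n := by
      exact_mod_cast Nat.div_add_mod n c
    have lt : ((n % c : ℕ):ℝ) < c := by exact_mod_cast Nat.mod_lt n hc
    have hq : (n:ℝ)/c - 1 ≤ ((n/c:ℕ):ℝ) := by
      rw [sub_le_iff_le_add, div_le_iff₀ hc']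
      nlinarith
    rw [show (1:ℝ)/c - 1/n = ((n:ℝ)/c - 1)/n by field_simp <;> ring]
    gcongr
  · filter_upwards [eventually_ge_atTop 1] with n hn
    have hn' : (0:ℝ) < n := by exact_mod_cast hn
    calc ((n/c:ℕ):ℝ)/n ≤ ((n:ℝ)/c)/n := by gcongr; exact Nat.cast_div_le
    _ = 1/c := by field_simp <;> ring

lemma summable_bound (m : ℕ) (hm : 2 ≤ m) : Summable (fun d : ℕ => 1 / (d:ℝ) ^ m) :=
  Real.summable_one_div_nat_pow.mpr hm

lemma summable_moebius_div (m : ℕ) (hm : 2 ≤ m) :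
    Summable (fun d : ℕ => (μ d : ℝ) / (d:ℝ) ^ m) := by
  refine Summable.of_norm (Summable.of_nonneg_of_le (fun d => norm_nonneg _)
    (fun d => ?_) (summable_bound m hm))
  rw [norm_div, norm_pow]
  rcases Nat.eq_zero_or_pos d with rfl | hd
  · simp
  · have h1 : ‖((μ d : ℤ) : ℝ)‖ ≤ 1 := by
      rw [Real.norm_eq_abs, ← Int.cast_abs]
      exact_mod_cast abs_moebius_le_one (n := d)
    have h2 : ‖(d:ℝ)‖ ^ m = (d:ℝ)^m := by rw [Real.norm_natCast]
    rw [h2]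
    gcongr

lemma zetaSum_nat (m : ℕ) (hm : 2 ≤ m) : zetaSum m = ∑' n : ℕ, 1 / (n:ℝ) ^ m := by
  unfold zetaSum
  congr 1; ext n
  rcases eq_or_ne n 0 with rfl | hn
  · rw [Nat.cast_zero, Real.zero_rpow (by norm_num; omega : -(m:ℝ) ≠ 0),
      zero_pow (by omega : m ≠ 0), div_zero]
  · have hn' : (0:ℝ) < n := by exact_mod_cast Nat.pos_of_ne_zero hn
    rw [Real.rpow_neg hn'.le, Real.rpow_natCast, one_div]

lemma zetaSum_pos (m : ℕ) (hm : 2 ≤ m) : 0 < zetaSum m := by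
  rw [zetaSum_nat m hm]
  have h := Summable.le_tsum (summable_bound m hm) 1 (fun i _ => by positivity)
  simp only [Nat.cast_one, one_pow, div_one] at h
  linarith

lemma moebius_tsum (m : ℕ) (hm : 2 ≤ m) :
    (∑' d : ℕ, (μ d : ℝ) / (d:ℝ) ^ m) * zetaSum m = 1 := by
  have hs : 1 < (m:ℂ).re := by
    rw [Complex.natCast_re]
    exact_mod_cast (by omega : 1 < m)
  have key := LSeries_one_mul_Lseries_moebius hs
  have hcpow : ∀ n : ℕ, n ≠ 0 → ((n:ℂ) ^ (m:ℂ)) = (((n:ℝ) ^ m : ℝ) : ℂ) := by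
    intro n hn
    rw [Complex.cpow_natCast]
    push_cast
    ring
  have h1 : LSeries 1 (m:ℂ) = ((zetaSum m : ℝ) : ℂ) := by
    rw [zetaSum_nat m hm, Complex.ofReal_tsum]
    refine tsum_congr fun n => ?_
    rcases eq_or_ne n 0 with rfl | hn
    · simp [LSeries.term, zero_pow (by omega : m ≠ 0)]
    · rw [LSeries.term_of_ne_zero hn, hcpow n hn, Pi.one_apply]
      push_cast
      ring
  have h2 : LSeries ↗μ (m:ℂ) = ((∑' d : ℕ, (μ d : ℝ) / (d:ℝ) ^ m : ℝ) : ℂ) := by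
    rw [Complex.ofReal_tsum]
    refine tsum_congr fun n => ?_
    rcases eq_or_ne n 0 with rfl | hn
    · simp [LSeries.term, zero_pow (by omega : m ≠ 0)]
    · rw [LSeries.term_of_ne_zero hn, hcpow n hn]
      push_cast
      ring
  rw [h1, h2, mul_comm] at key
  exact_mod_cast key

lemma key_tendsto (m k : ℕ) (hm : 2 ≤ m) (hk : 1 ≤ k) (g : ℕ → ℕ → ℝ)
    (hzero : ∀ n d, 1 ≤ n → (d = 0 ∨ n < d) → g n d = 0)
    (hbound : ∀ n d, 1 ≤ n → 1 ≤ d → |g n d| ≤ 1 / ((k * d : ℕ) : ℝ) ^ m)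
    (hlim : ∀ d, 1 ≤ d →
      Tendsto (fun n => g n d) atTop (𝓝 ((μ d : ℝ) / ((k * d : ℕ) : ℝ) ^ m))) :
    Tendsto (fun n : ℕ => ∑ d ∈ Icc 1 n, g n d) atTop
      (𝓝 ((1 / (k : ℝ) ^ m) / zetaSum m)) := by
  have hk' : (0:ℝ) < k := by exact_mod_cast hk
  set G : ℕ → ℝ := fun d => (μ d : ℝ) / ((k * d : ℕ) : ℝ) ^ m with hG
  have hG0 : G 0 = 0 := by simp [hG]
  have main : Tendsto (fun n : ℕ => ∑' d : ℕ, g n d) atTop (𝓝 (∑' d, G d)) := by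
    refine tendsto_tsum_of_dominated_convergence (bound := fun d => 1 / (d:ℝ) ^ m)
      (summable_bound m hm) (fun d => ?_) ?_
    · rcases Nat.eq_zero_or_pos d with rfl | hd
      · rw [hG0]
        refine Tendsto.congr' ?_ tendsto_const_nhds
        filter_upwards [eventually_ge_atTop 1] with n hn
        exact (hzero n 0 hn (Or.inl rfl)).symm
      · exact hlim d hd
    · filter_upwards [eventually_ge_atTop 1] with n hn d
      rcases Nat.eq_zero_or_pos d with rfl | hd
      · rw [hzero n 0 hn (Or.inl rfl)]
        simp [zero_pow (by omega : m ≠ 0)]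
      · refine (hbound n d hn hd).trans ?_
        have h1 : (0:ℝ) < (d:ℝ) ^ m := by
          have : (0:ℝ) < d := by exact_mod_cast hd
          positivity
        have h2 : (d:ℝ) ^ m ≤ ((k * d : ℕ) : ℝ) ^ m := by
          push_cast
          gcongr
          exact_mod_cast Nat.le_mul_of_pos_left d (show 0 < k from hk)
        exact one_div_le_one_div_of_le h1 h2
  have hlimval : (∑' d, G d) = (1 / (k : ℝ) ^ m) / zetaSum m := by
    have e : ∀ d : ℕ, G d = (1 / (k:ℝ)^m) * ((μ d : ℝ) / (d:ℝ) ^ m) := by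
      intro d
      rcases Nat.eq_zero_or_pos d with rfl | hd
      · simp [hG]
      · rw [hG]
        push_cast
        rw [mul_pow]
        field_simp
    rw [tsum_congr e, tsum_mul_left]
    have hZ := zetaSum_pos m hm
    have hM := moebius_tsum m hm
    have : (∑' d : ℕ, (μ d : ℝ) / (d:ℝ) ^ m) = 1 / zetaSum m := by
      field_simp at hM ⊢
      linarith [hM]
    rw [this]
    field_simp
  rw [← hlimval]
  refine main.congr' ?_
  filter_upwards [eventually_ge_atTop 1] with n hn
  exact tsum_eq_sum fun b hb => hzero n b hn (by simp only [mem_Icc] at hb; omega)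

end Aux

theorem gcd_and_largest_power_root_tendsto_zeta (m : ℕ) (hm : 2 ≤ m) (k : ℕ) (hk : 1 ≤ k) :
    Tendsto (fun n : ℕ =>
        (((Fintype.piFinset fun _ : Fin m => Finset.Icc 1 n).filter
            fun f => Finset.univ.gcd f = k).card : ℝ) / (n : ℝ) ^ m)
      atTop (𝓝 ((1 / (k : ℝ) ^ m) / zetaSum m)) ∧
    Tendsto (fun n : ℕ =>
        (((Finset.Icc 1 n).filter fun x => largestPowerRoot m x = k).card : ℝ) / (n : ℝ))
      atTop (𝓝 ((1 / (k : ℝ) ^ m) / zetaSum m)) := by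
  have hm1 : 1 ≤ m := by omega
  have hkd_pos : ∀ d : ℕ, 1 ≤ d → 0 < k * d := fun d hd => Nat.mul_pos hk hd
  constructor
  · set g : ℕ → ℕ → ℝ := fun n d =>
      (ArithmeticFunction.moebius d : ℝ) * ((n / (k * d) : ℕ) : ℝ) ^ m / (n : ℝ) ^ m with hg
    have hzero : ∀ n d, 1 ≤ n → (d = 0 ∨ n < d) → g n d = 0 := by
      intro n d hn hcase
      rcases hcase with rfl | hlt
      · simp [hg, zero_pow (by omega : m ≠ 0)]
      · have : n / (k * d) = 0 := Nat.div_eq_of_lt (by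
          calc n < d := hlt
          _ ≤ k * d := Nat.le_mul_of_pos_left d hk)
        simp [hg, this, zero_pow (by omega : m ≠ 0)]
    have hbound : ∀ n d, 1 ≤ n → 1 ≤ d → |g n d| ≤ 1 / ((k * d : ℕ) : ℝ) ^ m := by
      intro n d hn hd
      have hn' : (0:ℝ) < n := by exact_mod_cast hn
      have hkd : (0:ℝ) < ((k * d : ℕ) : ℝ) := by exact_mod_cast hkd_pos d hd
      have hq : ((n / (k * d) : ℕ) : ℝ) ≤ (n:ℝ) / ((k * d : ℕ) : ℝ) := Nat.cast_div_le
      have hq0 : (0:ℝ) ≤ ((n / (k * d) : ℕ) : ℝ) := Nat.cast_nonneg _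
      have hmu : |(ArithmeticFunction.moebius d : ℝ)| ≤ 1 := by
        rw [← Int.cast_abs]
        exact_mod_cast ArithmeticFunction.abs_moebius_le_one (n := d)
      have step : |g n d| ≤ ((n / (k * d) : ℕ) : ℝ) ^ m / (n:ℝ) ^ m := by
        rw [hg]
        rw [abs_div, abs_mul, abs_pow, abs_pow, abs_of_nonneg hq0,
          abs_of_nonneg hn'.le]
        have : |(ArithmeticFunction.moebius d : ℝ)| * ((n / (k * d) : ℕ) : ℝ) ^ m
            ≤ 1 * ((n / (k * d) : ℕ) : ℝ) ^ m := by
          gcongr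
        calc _ ≤ 1 * ((n / (k * d) : ℕ) : ℝ) ^ m / (n:ℝ) ^ m := by gcongr
        _ = ((n / (k * d) : ℕ) : ℝ) ^ m / (n:ℝ) ^ m := by ring
      refine step.trans ?_
      have hqn : ((n / (k * d) : ℕ) : ℝ) / (n:ℝ) ≤ 1 / ((k * d : ℕ) : ℝ) := by
        rw [div_le_div_iff₀ hn' hkd]
        calc ((n / (k * d) : ℕ) : ℝ) * ((k * d : ℕ) : ℝ)
            ≤ ((n:ℝ) / ((k * d : ℕ) : ℝ)) * ((k * d : ℕ) : ℝ) := by gcongr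
        _ = n := by field_simp
        _ = 1 * n := by ring
      rw [← div_pow]
      calc (((n / (k * d) : ℕ) : ℝ) / (n:ℝ)) ^ m
          ≤ (1 / ((k * d : ℕ) : ℝ)) ^ m := pow_le_pow_left₀ (by positivity) hqn m
      _ = 1 / ((k * d : ℕ) : ℝ) ^ m := by rw [div_pow, one_pow]
    have hlim : ∀ d, 1 ≤ d → Tendsto (fun n => g n d) atTop
        (𝓝 ((ArithmeticFunction.moebius d : ℝ) / ((k * d : ℕ) : ℝ) ^ m)) := by
      intro d hd
      have hkd : (0:ℝ) < ((k * d : ℕ) : ℝ) := by exact_mod_cast hkd_pos d hd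
      have t := (((tendsto_nat_div (k * d) (hkd_pos d hd)).pow m).const_mul
        (ArithmeticFunction.moebius d : ℝ))
      have he : ∀ n : ℕ, (ArithmeticFunction.moebius d : ℝ)
          * (((n / (k * d) : ℕ) : ℝ) / (n:ℝ)) ^ m = g n d := by
        intro n
        rw [hg, div_pow]
        ring
      rw [show (ArithmeticFunction.moebius d : ℝ) / ((k * d : ℕ) : ℝ) ^ m
          = (ArithmeticFunction.moebius d : ℝ) * (1 / ((k * d : ℕ) : ℝ)) ^ m by
        rw [div_pow, one_pow]; ring]
      exact t.congr he
    have key := key_tendsto m k hm hk g hzero hbound hlim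
    refine Tendsto.congr (fun n => ?_) key
    have hc := gcd_count m n k hm1 hk
    have hcR : (((Fintype.piFinset fun _ : Fin m => Finset.Icc 1 n).filter
        fun f => Finset.univ.gcd f = k).card : ℝ)
          = ∑ d ∈ Finset.Icc 1 n,
            (ArithmeticFunction.moebius d : ℝ) * ((n / (k * d) : ℕ) : ℝ) ^ m := by
      have h' := congrArg (fun z : ℤ => (z : ℝ)) hc
      simp only [Int.cast_sum, Int.cast_mul, Int.cast_pow, Int.cast_natCast] at h'
      exact h'
    rw [hcR, Finset.sum_div]
  · set g : ℕ → ℕ → ℝ := fun n d =>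
      (ArithmeticFunction.moebius d : ℝ) * ((n / (k * d) ^ m : ℕ) : ℝ) / (n : ℝ) with hg
    have hczero : ∀ d : ℕ, 1 ≤ d → 0 < (k * d) ^ m := fun d hd =>
      pow_pos (hkd_pos d hd) m
    have hzero : ∀ n d, 1 ≤ n → (d = 0 ∨ n < d) → g n d = 0 := by
      intro n d hn hcase
      rcases hcase with rfl | hlt
      · simp [hg, zero_pow (by omega : m ≠ 0)]
      · have : n / (k * d) ^ m = 0 := Nat.div_eq_of_lt (by
          calc n < d := hlt
          _ ≤ k * d := Nat.le_mul_of_pos_left d hk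
          _ ≤ (k * d) ^ m := Nat.le_self_pow (by omega) _)
        simp [hg, this]
    have hbound : ∀ n d, 1 ≤ n → 1 ≤ d → |g n d| ≤ 1 / ((k * d : ℕ) : ℝ) ^ m := by
      intro n d hn hd
      have hn' : (0:ℝ) < n := by exact_mod_cast hn
      have hkd : (0:ℝ) < (((k * d) ^ m : ℕ) : ℝ) := by exact_mod_cast hczero d hd
      have hq : ((n / (k * d) ^ m : ℕ) : ℝ) ≤ (n:ℝ) / (((k * d) ^ m : ℕ) : ℝ) :=
        Nat.cast_div_le
      have hq0 : (0:ℝ) ≤ ((n / (k * d) ^ m : ℕ) : ℝ) := Nat.cast_nonneg _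
      have hmu : |(ArithmeticFunction.moebius d : ℝ)| ≤ 1 := by
        rw [← Int.cast_abs]
        exact_mod_cast ArithmeticFunction.abs_moebius_le_one (n := d)
      have hcast : ((k * d : ℕ) : ℝ) ^ m = (((k * d) ^ m : ℕ) : ℝ) := by push_cast; ring
      rw [hcast]
      have step : |g n d| ≤ ((n / (k * d) ^ m : ℕ) : ℝ) / (n:ℝ) := by
        rw [hg]
        rw [abs_div, abs_mul, abs_of_nonneg hq0, abs_of_nonneg hn'.le]
        calc |(ArithmeticFunction.moebius d : ℝ)| * ((n / (k * d) ^ m : ℕ) : ℝ) / (n:ℝ)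
            ≤ 1 * ((n / (k * d) ^ m : ℕ) : ℝ) / (n:ℝ) := by gcongr
        _ = ((n / (k * d) ^ m : ℕ) : ℝ) / (n:ℝ) := by ring
      refine step.trans ?_
      rw [div_le_div_iff₀ hn' hkd]
      calc ((n / (k * d) ^ m : ℕ) : ℝ) * (((k * d) ^ m : ℕ) : ℝ)
          ≤ ((n:ℝ) / (((k * d) ^ m : ℕ) : ℝ)) * (((k * d) ^ m : ℕ) : ℝ) := by gcongr
      _ = n := by field_simp
      _ = 1 * n := by ring
    have hlim : ∀ d, 1 ≤ d → Tendsto (fun n => g n d) atTop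
        (𝓝 ((ArithmeticFunction.moebius d : ℝ) / ((k * d : ℕ) : ℝ) ^ m)) := by
      intro d hd
      have t := ((tendsto_nat_div ((k * d) ^ m) (hczero d hd)).const_mul
        (ArithmeticFunction.moebius d : ℝ))
      have he : ∀ n : ℕ, (ArithmeticFunction.moebius d : ℝ)
          * (((n / (k * d) ^ m : ℕ) : ℝ) / (n:ℝ)) = g n d := by
        intro n
        rw [hg]
        ring
      have hcast : ((k * d : ℕ) : ℝ) ^ m = ((((k * d) ^ m : ℕ)) : ℝ) := by push_cast; ring
      rw [show (ArithmeticFunction.moebius d : ℝ) / ((k * d : ℕ) : ℝ) ^ m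
          = (ArithmeticFunction.moebius d : ℝ) * (1 / ((((k * d) ^ m : ℕ)) : ℝ)) by
        rw [hcast]; ring]
      exact t.congr he
    have key := key_tendsto m k hm hk g hzero hbound hlim
    refine Tendsto.congr (fun n => ?_) key
    have hc := lpr_count m n k hm1 hk
    have hcR : (((Finset.Icc 1 n).filter fun x => largestPowerRoot m x = k).card : ℝ)
        = ∑ d ∈ Finset.Icc 1 n,
          (ArithmeticFunction.moebius d : ℝ) * ((n / (k * d) ^ m : ℕ) : ℝ) := by
      have h' := congrArg (fun z : ℤ => (z : ℝ)) hc
      simp only [Int.cast_sum, Int.cast_mul, Int.cast_pow, Int.cast_natCast] at h'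
      exact h'
    rw [hcR, Finset.sum_div]
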